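/- Let (Ω,𝔉,P) be a probability space, B > 0, and μ, μ̂ : Ω → ℝ^p measurable with |μ_a| ≤ B and |μ̂_a| ≤ B almost surely for every coordinate a ∈ {1,…,p}. Then there exists a constant c depending only on B, k and p such that for every codebook C = (c_1,…,c_k) in ℝ^p with |c_{j,a}| ≤ B for all j and a: |E[f_C(μ̂)] − E[f_C(μ)]| ≤ c·max_{a} E|μ̂_a − μ_a|; consequently the supremum over all such codebooks of |E[f_C(μ̂)] − E[f_C(μ)]| is bounded by c·max_{a} E|μ̂_a − μ_a|. -/

import Mathlib

open MeasureTheory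

noncomputable def fC {p k : ℕ} (C : Fin k → EuclideanSpace ℝ (Fin p))
    (x : EuclideanSpace ℝ (Fin p)) : ℝ :=
  ⨅ j, ‖x - C j‖ ^ 2

lemma norm_sq_eq {p : ℕ} (x : EuclideanSpace ℝ (Fin p)) :
    ‖x‖ ^ 2 = ∑ a, (x a) ^ 2 := by
  rw [EuclideanSpace.norm_eq, Real.sq_sqrt (by positivity)]
  simp [Real.norm_eq_abs, sq_abs]

lemma fC_nonneg {p k : ℕ} [NeZero k] (C : Fin k → EuclideanSpace ℝ (Fin p))
    (x : EuclideanSpace ℝ (Fin p)) : 0 ≤ fC C x :=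
  le_ciInf fun j => by positivity

lemma fC_bddBelow {p k : ℕ} (C : Fin k → EuclideanSpace ℝ (Fin p))
    (x : EuclideanSpace ℝ (Fin p)) : BddBelow (Set.range fun j => ‖x - C j‖ ^ 2) :=
  ⟨0, by rintro _ ⟨j, rfl⟩; positivity⟩

lemma sq_norm_le {p k : ℕ} (B : ℝ) (C : Fin k → EuclideanSpace ℝ (Fin p))
    (hC : ∀ j a, |C j a| ≤ B) (x y : EuclideanSpace ℝ (Fin p))
    (hx : ∀ a, |x a| ≤ B) (hy : ∀ a, |y a| ≤ B) (j : Fin k) :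
    ‖x - C j‖ ^ 2 ≤ ‖y - C j‖ ^ 2 + 4 * B * ∑ a, |x a - y a| := by
  have h1 : ‖x - C j‖ ^ 2 = ∑ a, (x a - C j a) ^ 2 := by
    rw [norm_sq_eq]; simp [PiLp.sub_apply]
  have h2 : ‖y - C j‖ ^ 2 = ∑ a, (y a - C j a) ^ 2 := by
    rw [norm_sq_eq]; simp [PiLp.sub_apply]
  rw [h1, h2, Finset.mul_sum, ← Finset.sum_add_distrib]
  apply Finset.sum_le_sum
  intro a _
  have key : (x a - C j a) ^ 2 - (y a - C j a) ^ 2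
      = (x a - y a) * (x a + y a - 2 * C j a) := by ring
  have h3 : (x a - C j a) ^ 2 - (y a - C j a) ^ 2 ≤ 4 * B * |x a - y a| := by
    rw [key]
    calc (x a - y a) * (x a + y a - 2 * C j a) ≤ |(x a - y a) * (x a + y a - 2 * C j a)| :=
          le_abs_self _
      _ = |x a - y a| * |x a + y a - 2 * C j a| := abs_mul _ _
      _ ≤ |x a - y a| * (4 * B) := by
          apply mul_le_mul_of_nonneg_left _ (abs_nonneg _)
          calc |x a + y a - 2 * C j a| ≤ |x a| + |y a| + 2 * |C j a| := by
                calc |x a + y a - 2 * C j a| ≤ |x a + y a| + |2 * C j a| :=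
                      abs_sub (x a + y a) (2 * C j a)
                  _ ≤ |x a| + |y a| + 2 * |C j a| := by
                      rw [abs_mul, abs_two]
                      exact add_le_add (abs_add_le _ _) le_rfl
            _ ≤ B + B + 2 * B := by
                have := hC j a
                have := hx a
                have := hy a
                linarith [mul_le_mul_of_nonneg_left (hC j a) (by norm_num : (0:ℝ) ≤ 2)]
            _ = 4 * B := by ring
      _ = 4 * B * |x a - y a| := mul_comm _ _
  linarith

lemma fC_lip {p k : ℕ} [NeZero k] (B : ℝ) (C : Fin k → EuclideanSpace ℝ (Fin p))
    (hC : ∀ j a, |C j a| ≤ B) (x y : EuclideanSpace ℝ (Fin p))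
    (hx : ∀ a, |x a| ≤ B) (hy : ∀ a, |y a| ≤ B) :
    |fC C x - fC C y| ≤ 4 * B * ∑ a, |x a - y a| := by
  have main : ∀ u v : EuclideanSpace ℝ (Fin p), (∀ a, |u a| ≤ B) → (∀ a, |v a| ≤ B) →
      fC C u - fC C v ≤ 4 * B * ∑ a, |u a - v a| := by
    intro u v hu hv
    obtain ⟨j, hj⟩ := exists_eq_ciInf_of_finite (f := fun j => ‖v - C j‖ ^ 2)
    have h1 : fC C u ≤ ‖u - C j‖ ^ 2 := ciInf_le (fC_bddBelow C u) j
    have h2 := sq_norm_le B C hC u v hu hv j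
    have h3 : fC C v = ‖v - C j‖ ^ 2 := hj.symm
    linarith
  rw [abs_sub_le_iff]
  constructor
  · exact main x y hx hy
  · have := main y x hy hx
    calc fC C y - fC C x ≤ 4 * B * ∑ a, |y a - x a| := this
      _ = 4 * B * ∑ a, |x a - y a| := by simp [abs_sub_comm]

lemma fC_bound {p k : ℕ} [NeZero k] (B : ℝ) (hB : 0 ≤ B)
    (C : Fin k → EuclideanSpace ℝ (Fin p)) (hC : ∀ j a, |C j a| ≤ B)
    (x : EuclideanSpace ℝ (Fin p)) (hx : ∀ a, |x a| ≤ B) :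
    |fC C x| ≤ p * (4 * B ^ 2) := by
  rw [abs_of_nonneg (fC_nonneg C x)]
  have h1 : fC C x ≤ ‖x - C 0‖ ^ 2 := ciInf_le (fC_bddBelow C x) 0
  have h2 : ‖x - C 0‖ ^ 2 = ∑ a, (x a - C 0 a) ^ 2 := by
    rw [norm_sq_eq]; simp [PiLp.sub_apply]
  have h3 : ∑ a, (x a - C 0 a) ^ 2 ≤ ∑ _a : Fin p, 4 * B ^ 2 := by
    apply Finset.sum_le_sum
    intro a _
    have : |x a - C 0 a| ≤ 2 * B := by
      calc |x a - C 0 a| ≤ |x a| + |C 0 a| := abs_sub _ _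
        _ ≤ B + B := add_le_add (hx a) (hC 0 a)
        _ = 2 * B := by ring
    calc (x a - C 0 a) ^ 2 = |x a - C 0 a| ^ 2 := (sq_abs _).symm
      _ ≤ (2 * B) ^ 2 := by apply pow_le_pow_left₀ (abs_nonneg _) this
      _ = 4 * B ^ 2 := by ring
  simp only [Finset.sum_const, Finset.card_univ, Fintype.card_fin, nsmul_eq_mul] at h3
  linarith

theorem stmt_14 (B : ℝ) (hB : 0 < B) (k p : ℕ) (hk : 0 < k) :
    ∃ c : ℝ, 0 ≤ c ∧
      ∀ (Ω : Type) (m0 : MeasurableSpace Ω) (P : Measure Ω), IsProbabilityMeasure P →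
      ∀ μv μh : Ω → EuclideanSpace ℝ (Fin p),
        (∀ a, Measurable fun ω => μv ω a) → (∀ a, Measurable fun ω => μh ω a) →
        (∀ a, ∀ᵐ ω ∂P, |μv ω a| ≤ B) → (∀ a, ∀ᵐ ω ∂P, |μh ω a| ≤ B) →
      ∀ C : Fin k → EuclideanSpace ℝ (Fin p), (∀ j a, |C j a| ≤ B) →
        |∫ ω, fC C (μh ω) ∂P - ∫ ω, fC C (μv ω) ∂P| ≤
          c * ⨆ a : Fin p, ∫ ω, |μh ω a - μv ω a| ∂P := by
  have : NeZero k := ⟨hk.ne'⟩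
  refine ⟨4 * B * p, by positivity, ?_⟩
  intro Ω m0 P hP μv μh hmv hmh hbv hbh C hC
  -- measurability of fC compositions
  have measfC : ∀ (f : Ω → EuclideanSpace ℝ (Fin p)), (∀ a, Measurable fun ω => f ω a) →
      Measurable fun ω => fC C (f ω) := by
    intro f hf
    apply Measurable.iInf
    intro j
    apply Measurable.pow_const
    apply Measurable.norm
    have hf' : Measurable f := by
      exact (WithLp.measurable_toLp 2 (Fin p → ℝ)).comp (measurable_pi_lambda _ hf)
    exact hf'.sub measurable_const
  -- a.e. bounds as full statements
  have hbv' : ∀ᵐ ω ∂P, ∀ a, |μv ω a| ≤ B := ae_all_iff.mpr hbv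
  have hbh' : ∀ᵐ ω ∂P, ∀ a, |μh ω a| ≤ B := ae_all_iff.mpr hbh
  -- integrability
  have intfC : ∀ (f : Ω → EuclideanSpace ℝ (Fin p)), (∀ a, Measurable fun ω => f ω a) →
      (∀ᵐ ω ∂P, ∀ a, |f ω a| ≤ B) → Integrable (fun ω => fC C (f ω)) P := by
    intro f hf hb
    apply Integrable.mono' (integrable_const (p * (4 * B ^ 2))) (measfC f hf).aestronglyMeasurable
    filter_upwards [hb] with ω hω
    rw [Real.norm_eq_abs]
    exact fC_bound B hB.le C hC (f ω) hω
  have ih := intfC μh hmh hbh'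
  have iv := intfC μv hmv hbv'
  have intd : ∀ a : Fin p, Integrable (fun ω => |μh ω a - μv ω a|) P := by
    intro a
    apply Integrable.mono' (integrable_const (2 * B))
      (((hmh a).sub (hmv a)).abs.aestronglyMeasurable)
    filter_upwards [hbv a, hbh a] with ω h1 h2
    rw [Real.norm_eq_abs, abs_abs]
    calc |μh ω a - μv ω a| ≤ |μh ω a| + |μv ω a| := abs_sub _ _
      _ ≤ B + B := add_le_add h2 h1
      _ = 2 * B := by ring
  set S := ⨆ a : Fin p, ∫ ω, |μh ω a - μv ω a| ∂P with hS
  have hSb : ∀ a : Fin p, ∫ ω, |μh ω a - μv ω a| ∂P ≤ S :=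
    fun a => le_ciSup (f := fun a : Fin p => ∫ ω, |μh ω a - μv ω a| ∂P) (Set.Finite.bddAbove (Set.finite_range _)) a
  have step1 : |∫ ω, fC C (μh ω) ∂P - ∫ ω, fC C (μv ω) ∂P|
      ≤ ∫ ω, |fC C (μh ω) - fC C (μv ω)| ∂P := by
    rw [← integral_sub ih iv]
    simpa [Real.norm_eq_abs] using
      norm_integral_le_integral_norm (μ := P) (fun ω => fC C (μh ω) - fC C (μv ω))
  have step2 : ∫ ω, |fC C (μh ω) - fC C (μv ω)| ∂P
      ≤ ∫ ω, (4 * B * ∑ a, |μh ω a - μv ω a|) ∂P := by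
    apply integral_mono_ae ((ih.sub iv).abs)
    · exact (Integrable.const_mul (integrable_finset_sum _ (fun a _ => intd a)) (4 * B))
    · filter_upwards [hbv', hbh'] with ω h1 h2
      exact fC_lip B C hC (μh ω) (μv ω) h2 h1
  have step3 : ∫ ω, (4 * B * ∑ a, |μh ω a - μv ω a|) ∂P
      = 4 * B * ∑ a, ∫ ω, |μh ω a - μv ω a| ∂P := by
    rw [integral_const_mul, integral_finset_sum _ (fun a _ => intd a)]
  have step4 : ∑ a, ∫ ω, |μh ω a - μv ω a| ∂P ≤ p * S := by
    calc ∑ a, ∫ ω, |μh ω a - μv ω a| ∂P ≤ ∑ _a : Fin p, S :=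
          Finset.sum_le_sum (fun a _ => hSb a)
      _ = p * S := by simp [Finset.sum_const, mul_comm]
  calc |∫ ω, fC C (μh ω) ∂P - ∫ ω, fC C (μv ω) ∂P|
      ≤ 4 * B * ∑ a, ∫ ω, |μh ω a - μv ω a| ∂P := by
        rw [← step3]; exact step1.trans step2
    _ ≤ 4 * B * (p * S) := by
        apply mul_le_mul_of_nonneg_left step4 (by positivity)
    _ = 4 * B * p * S := by ring
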